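/- A regular multi-pointed category with kernels C is a 2-star-permutable category if and only if every square of type (1) in C is a star-regular pushout. -/

import Mathlib

open CategoryTheory CategoryTheory.Limits

universe v u

namespace Paper

variable {𝒞 : Type u} [Category.{v} 𝒞]

/-- `f` is a regular epimorphism: it is a coequaliser of some pair of morphisms. -/
def IsRegEpi {X Y : 𝒞} (f : X ⟶ Y) : Prop :=
  ∃ (Z : 𝒞) (a b : Z ⟶ X), a ≫ f = b ≫ f ∧
    ∀ {T : 𝒞} (h : X ⟶ T), a ≫ h = b ≫ h → ∃! u : Y ⟶ T, f ≫ u = h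

/-- Regular epimorphisms are pullback-stable. -/
def RegEpisStable (𝒞 : Type u) [Category.{v} 𝒞] : Prop :=
  ∀ {P X Y Z : 𝒞} (p₁ : P ⟶ X) (p₂ : P ⟶ Y) (f : X ⟶ Z) (g : Y ⟶ Z),
    IsPullback p₁ p₂ f g → IsRegEpi g → IsRegEpi p₁

/-- Every kernel pair admits a coequaliser. -/
def KernelPairsHaveCoequalisers (𝒞 : Type u) [Category.{v} 𝒞] : Prop :=
  ∀ {R X Y : 𝒞} (f : X ⟶ Y) (a b : R ⟶ X), IsKernelPair f a b →
    ∃ (Q : 𝒞) (q : X ⟶ Q), a ≫ q = b ≫ q ∧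
      ∀ {T : 𝒞} (h : X ⟶ T), a ≫ h = b ≫ h → ∃! u : Q ⟶ T, q ≫ u = h

/-- A relation from `X` to `Y`: a jointly monomorphic span. -/
structure Rel (𝒞 : Type u) [Category.{v} 𝒞] (X Y : 𝒞) where
  R : 𝒞
  p1 : R ⟶ X
  p2 : R ⟶ Y
  jm : ∀ {Z : 𝒞} (a b : Z ⟶ R), a ≫ p1 = b ≫ p1 → a ≫ p2 = b ≫ p2 → a = b

variable {X Y Z : 𝒞}

/-- `ρ` is a subrelation of `σ`. -/
def Rel.le (ρ σ : Rel 𝒞 X Y) : Prop :=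
  ∃ j : ρ.R ⟶ σ.R, j ≫ σ.p1 = ρ.p1 ∧ j ≫ σ.p2 = ρ.p2

/-- `ρ` and `σ` are the same relation (isomorphic as subobjects of `X × Y`). -/
def Rel.equiv (ρ σ : Rel 𝒞 X Y) : Prop := ρ.le σ ∧ σ.le ρ

/-- The opposite relation. -/
def Rel.op (ρ : Rel 𝒞 X Y) : Rel 𝒞 Y X :=
  ⟨ρ.R, ρ.p2, ρ.p1, fun a b h2 h1 => ρ.jm a b h1 h2⟩

/-- A morphism viewed as a relation. -/
def homRel (f : X ⟶ Y) : Rel 𝒞 X Y :=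
  ⟨X, 𝟙 X, f, fun a b h _ => by simpa using h⟩

/-- The discrete (diagonal) relation on `X`. -/
def diagRel (X : 𝒞) : Rel 𝒞 X X := homRel (𝟙 X)

/-- The kernel pair `Eq(f)` of `f` as a relation on `X`. -/
noncomputable def kerPairRel [HasPullbacks 𝒞] (f : X ⟶ Y) : Rel 𝒞 X X :=
  ⟨pullback f f, pullback.fst f f, pullback.snd f f,
    fun a b h1 h2 => pullback.hom_ext h1 h2⟩

/-- `τ` is the composite `σρ` (first `ρ` from `X` to `Y`, then `σ` from `Y` to `Z`),
i.e. the (regular epi, jointly mono) factorisation of the span induced on the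
pullback of `ρ.p2` and `σ.p1`. -/
def IsRelComp [HasPullbacks 𝒞] (σ : Rel 𝒞 Y Z) (ρ : Rel 𝒞 X Y) (τ : Rel 𝒞 X Z) : Prop :=
  ∃ e : pullback ρ.p2 σ.p1 ⟶ τ.R, IsRegEpi e ∧
    e ≫ τ.p1 = pullback.fst ρ.p2 σ.p1 ≫ ρ.p1 ∧
    e ≫ τ.p2 = pullback.snd ρ.p2 σ.p1 ≫ σ.p2

def Rel.IsReflexive (ρ : Rel 𝒞 X X) : Prop :=
  ∃ r : X ⟶ ρ.R, r ≫ ρ.p1 = 𝟙 X ∧ r ≫ ρ.p2 = 𝟙 X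

def Rel.IsSymmetric (ρ : Rel 𝒞 X X) : Prop :=
  ∃ s : ρ.R ⟶ ρ.R, s ≫ ρ.p1 = ρ.p2 ∧ s ≫ ρ.p2 = ρ.p1

def Rel.IsTransitive [HasPullbacks 𝒞] (ρ : Rel 𝒞 X X) : Prop :=
  ∃ t : pullback ρ.p2 ρ.p1 ⟶ ρ.R,
    t ≫ ρ.p1 = pullback.fst ρ.p2 ρ.p1 ≫ ρ.p1 ∧
    t ≫ ρ.p2 = pullback.snd ρ.p2 ρ.p1 ≫ ρ.p2

def Rel.IsEquivalence [HasPullbacks 𝒞] (ρ : Rel 𝒞 X X) : Prop :=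
  ρ.IsReflexive ∧ ρ.IsSymmetric ∧ ρ.IsTransitive

/-- A finitely complete category is a Mal'tsev category when every reflexive
relation in it is an equivalence relation. -/
def IsMaltsev (𝒞 : Type u) [Category.{v} 𝒞] [HasPullbacks 𝒞] : Prop :=
  ∀ {X : 𝒞} (ρ : Rel 𝒞 X X), ρ.IsReflexive → ρ.IsEquivalence

/-- A square of type (1): split epimorphisms `f` (with section `s`) and `g`
(with section `t`), regular epimorphisms `c` and `d`, with `f·c = d·g` and
`s·d = c·t`. -/
structure IsSquare1 {A B E D : 𝒞} (f : A ⟶ B) (s : B ⟶ A) (g : E ⟶ D) (t : D ⟶ E)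
    (c : E ⟶ A) (d : D ⟶ B) : Prop where
  sec_f : s ≫ f = 𝟙 B
  sec_g : t ≫ g = 𝟙 D
  regepi_c : IsRegEpi c
  regepi_d : IsRegEpi d
  comm1 : c ≫ f = g ≫ d
  comm2 : d ≫ s = t ≫ c

/-- `N` is an ideal of morphisms. -/
def IsIdeal (N : MorphismProperty 𝒞) : Prop :=
  ∀ {X Y Z : 𝒞} (f : X ⟶ Y) (g : Y ⟶ Z), N f ∨ N g → N (f ≫ g)

/-- `n` is an `N`-kernel of `f`. -/
def IsNKernel (N : MorphismProperty 𝒞) {X Y K : 𝒞} (f : X ⟶ Y) (n : K ⟶ X) : Prop :=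
  N (n ≫ f) ∧ ∀ {Z : 𝒞} (m : Z ⟶ X), N (m ≫ f) → ∃! u : Z ⟶ K, u ≫ n = m

/-- Every morphism admits an `N`-kernel. -/
def HasNKernels (N : MorphismProperty 𝒞) : Prop :=
  ∀ {X Y : 𝒞} (f : X ⟶ Y), ∃ (K : 𝒞) (n : K ⟶ X), IsNKernel N f n

/-- `τ` is the largest star subrelation `ρ*` of the relation `ρ`. -/
def IsLargestStarSub (N : MorphismProperty 𝒞) (ρ τ : Rel 𝒞 X Y) : Prop :=
  τ.le ρ ∧ N τ.p1 ∧ ∀ σ : Rel 𝒞 X Y, σ.le ρ → N σ.p1 → σ.le τ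

/-- `(s1, s2)` is the star-kernel of `f`: the universal star coequalised by `f`. -/
def IsStarKernel (N : MorphismProperty 𝒞) {S X Y : 𝒞} (f : X ⟶ Y) (s1 s2 : S ⟶ X) : Prop :=
  N s1 ∧ s1 ≫ f = s2 ≫ f ∧
    ∀ {T : 𝒞} (t1 t2 : T ⟶ X), N t1 → t1 ≫ f = t2 ≫ f →
      ∃! u : T ⟶ S, u ≫ s1 = t1 ∧ u ≫ s2 = t2

/-- `(ν1, ν2)` is the star of the pullback relation of `(g, δ)`: the universal
pair with `ν1 ∈ N` and `δ·ν1 = g·ν2`. -/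
def IsStarPullbackRel (N : MorphismProperty 𝒞) {W E D P : 𝒞} (δ : W ⟶ D) (g : E ⟶ D)
    (ν1 : P ⟶ W) (ν2 : P ⟶ E) : Prop :=
  N ν1 ∧ ν1 ≫ δ = ν2 ≫ g ∧
    ∀ {T : 𝒞} (t1 : T ⟶ W) (t2 : T ⟶ E), N t1 → t1 ≫ δ = t2 ≫ g →
      ∃! u : T ⟶ P, u ≫ ν1 = t1 ∧ u ≫ ν2 = t2

/-- `f` is a coequaliser of `(s1, s2)`. -/
def IsCoeqOf {S X Y : 𝒞} (f : X ⟶ Y) (s1 s2 : S ⟶ X) : Prop :=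
  s1 ≫ f = s2 ≫ f ∧ ∀ {T : 𝒞} (h : X ⟶ T), s1 ≫ h = s2 ≫ h → ∃! u : Y ⟶ T, f ≫ u = h

/-- Star-regularity: every regular epimorphism is a coequaliser of a star. -/
def StarRegular (𝒞 : Type u) [Category.{v} 𝒞] (N : MorphismProperty 𝒞) : Prop :=
  ∀ {X Y : 𝒞} (f : X ⟶ Y), IsRegEpi f →
    ∃ (S : 𝒞) (s1 s2 : S ⟶ X), N s1 ∧ IsCoeqOf f s1 s2

/-- `f` is saturating: the induced morphism between the `N`-kernels of the
identities is a regular epimorphism. -/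
def Saturating (N : MorphismProperty 𝒞) {X Y : 𝒞} (f : X ⟶ Y) : Prop :=
  ∀ {KX KY : 𝒞} (nX : KX ⟶ X) (nY : KY ⟶ Y), IsNKernel N (𝟙 X) nX → IsNKernel N (𝟙 Y) nY →
    ∀ u : KX ⟶ KY, u ≫ nY = nX ≫ f → IsRegEpi u

/-- `X` is an `N`-trivial object. -/
def NTrivial (N : MorphismProperty 𝒞) (X : 𝒞) : Prop := N (𝟙 X)

/-- The multi-pointed category has enough trivial objects: `N` is a closed ideal and
`N`-trivial objects are closed under subobjects and squares. -/
def EnoughTrivialObjects [HasBinaryProducts 𝒞] (N : MorphismProperty 𝒞) : Prop :=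
  (∀ {X Y : 𝒞} (f : X ⟶ Y), N f → ∃ (T : 𝒞) (p : X ⟶ T) (q : T ⟶ Y),
      NTrivial N T ∧ p ≫ q = f) ∧
  (∀ {S X : 𝒞} (m : S ⟶ X), Mono m → NTrivial N X → NTrivial N S) ∧
  (∀ X : 𝒞, NTrivial N X → NTrivial N (X ⨯ X))

/-- A square of type (1) is a star-regular pushout when `(c g°)* = f° d*`. -/
def IsStarRegularPushout [HasPullbacks 𝒞] (N : MorphismProperty 𝒞) {A B E D : 𝒞}
    (f : A ⟶ B) (g : E ⟶ D) (c : E ⟶ A) (d : D ⟶ B) : Prop :=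
  ∀ (ρ τ μ : Rel 𝒞 D A) (ds : Rel 𝒞 D B),
    IsRelComp (homRel c) (Rel.op (homRel g)) ρ → IsLargestStarSub N ρ τ →
    IsLargestStarSub N (homRel d) ds → IsRelComp (Rel.op (homRel f)) ds μ →
    τ.equiv μ

/-- 2-star-permutability: `Eq(f) Eq(g)* = Eq(g) Eq(f)*` for all regular
epimorphisms `f`, `g` with the same domain. -/
def TwoStarPermutable (𝒞 : Type u) [Category.{v} 𝒞] [HasPullbacks 𝒞]
    (N : MorphismProperty 𝒞) : Prop :=
  ∀ {X Y Z : 𝒞} (f : X ⟶ Y) (g : X ⟶ Z), IsRegEpi f → IsRegEpi g →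
    ∀ (sf sg : Rel 𝒞 X X), IsLargestStarSub N (kerPairRel f) sf →
      IsLargestStarSub N (kerPairRel g) sg →
    ∀ (τ₁ τ₂ : Rel 𝒞 X X), IsRelComp (kerPairRel f) sg τ₁ →
      IsRelComp (kerPairRel g) sf τ₂ → τ₁.equiv τ₂

section Pointed

variable [HasZeroMorphisms 𝒞]

/-- `k` is a kernel of `f`. -/
def IsKernelOf {K X Y : 𝒞} (k : K ⟶ X) (f : X ⟶ Y) : Prop :=
  k ≫ f = 0 ∧ ∀ {Z : 𝒞} (m : Z ⟶ X), m ≫ f = 0 → ∃! u : Z ⟶ K, u ≫ k = m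

/-- `f` is a cokernel of `k`. -/
def IsCokernelOf {X Y K : 𝒞} (f : X ⟶ Y) (k : K ⟶ X) : Prop :=
  k ≫ f = 0 ∧ ∀ {T : 𝒞} (h : X ⟶ T), k ≫ h = 0 → ∃! u : Y ⟶ T, f ≫ u = h

/-- Short exact sequence `K → X ↠ Y`. -/
def IsShortExact {K X Y : 𝒞} (k : K ⟶ X) (f : X ⟶ Y) : Prop :=
  IsKernelOf k f ∧ IsCokernelOf f k

/-- Subtractivity: every reflexive, left punctual relation is right punctual. -/
def IsSubtractive (𝒞 : Type u) [Category.{v} 𝒞] [HasZeroMorphisms 𝒞] : Prop :=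
  ∀ {X : 𝒞} (ρ : Rel 𝒞 X X), ρ.IsReflexive →
    (∃ l : X ⟶ ρ.R, l ≫ ρ.p1 = 𝟙 X ∧ l ≫ ρ.p2 = 0) →
    (∃ r : X ⟶ ρ.R, r ≫ ρ.p1 = 0 ∧ r ≫ ρ.p2 = 𝟙 X)

end Pointed


section Toolkit

lemma IsRegEpi.cancel {X Y : 𝒞} {f : X ⟶ Y} (hf : IsRegEpi f) {T : 𝒞} {u v : Y ⟶ T}
    (h : f ≫ u = f ≫ v) : u = v := by
  obtain ⟨Z, a, b, hab, hup⟩ := hf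
  have h1 : a ≫ f ≫ u = b ≫ f ≫ u := by
    rw [← Category.assoc, ← Category.assoc, hab]
  obtain ⟨w, hw, huniq⟩ := hup (f ≫ u) h1
  exact (huniq u rfl).trans (huniq v h.symm).symm

lemma IsRegEpi.coeqKernelPair [HasPullbacks 𝒞] {X Y : 𝒞} {f : X ⟶ Y} (hf : IsRegEpi f) :
    IsCoeqOf f (pullback.fst f f) (pullback.snd f f) := by
  refine ⟨pullback.condition, ?_⟩
  intro T h hh
  obtain ⟨Z, a, b, hab, hup⟩ := hf
  refine hup h ?_
  have h1 : pullback.lift a b hab ≫ pullback.fst f f ≫ h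
      = pullback.lift a b hab ≫ pullback.snd f f ≫ h := by rw [hh]
  erw [pullback.lift_fst_assoc, pullback.lift_snd_assoc] at h1
  exact h1

lemma isRegEpi_of_section {X Y : 𝒞} {g : X ⟶ Y} (t : Y ⟶ X) (ht : t ≫ g = 𝟙 Y) :
    IsRegEpi g := by
  refine ⟨X, g ≫ t, 𝟙 X, by simp [Category.assoc, ht], ?_⟩
  intro T h hh
  refine ⟨t ≫ h, ?_, ?_⟩
  · show g ≫ t ≫ h = h
    rw [← Category.assoc]
    simpa using hh
  · intro u hu
    rw [← hu, ← Category.assoc, ht, Category.id_comp]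

lemma regEpi_comp [HasPullbacks 𝒞] (hstab : RegEpisStable 𝒞) {X Y Z : 𝒞}
    {f : X ⟶ Y} {g : Y ⟶ Z} (hf : IsRegEpi f) (hg : IsRegEpi g) : IsRegEpi (f ≫ g) := by
  refine ⟨pullback (f ≫ g) (f ≫ g), pullback.fst _ _, pullback.snd _ _, pullback.condition, ?_⟩
  intro T h hh
  -- descend along f
  have hw : (pullback.fst f f : pullback f f ⟶ X) ≫ f ≫ g = pullback.snd f f ≫ f ≫ g := by
    rw [← Category.assoc, pullback.condition, Category.assoc]
  have hstep : pullback.fst f f ≫ h = pullback.snd f f ≫ h := by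
    have h1 := pullback.lift_fst (f := f ≫ g) (g := f ≫ g) (pullback.fst f f) (pullback.snd f f) hw
    have h2 := pullback.lift_snd (f := f ≫ g) (g := f ≫ g) (pullback.fst f f) (pullback.snd f f) hw
    calc pullback.fst f f ≫ h
        = pullback.lift _ _ hw ≫ pullback.fst (f ≫ g) (f ≫ g) ≫ h := by rw [← Category.assoc, h1]
      _ = pullback.lift _ _ hw ≫ pullback.snd (f ≫ g) (f ≫ g) ≫ h := by rw [hh]
      _ = pullback.snd f f ≫ h := by rw [← Category.assoc, h2]
  obtain ⟨h', hfh', _⟩ := hf.coeqKernelPair.2 h hstep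
  -- show h' coequalises the kernel pair of g, using covers
  have hP1 : IsRegEpi (pullback.fst (pullback.fst g g) f) :=
    hstab _ _ _ _ (IsPullback.of_hasPullback (pullback.fst g g) f) hf
  set P1 := pullback (pullback.fst g g) f
  set a1 : P1 ⟶ pullback g g := pullback.fst (pullback.fst g g) f
  set b1 : P1 ⟶ X := pullback.snd (pullback.fst g g) f
  have hc1 : a1 ≫ pullback.fst g g = b1 ≫ f := pullback.condition
  have hP2 : IsRegEpi (pullback.fst (a1 ≫ pullback.snd g g) f) :=
    hstab _ _ _ _ (IsPullback.of_hasPullback (a1 ≫ pullback.snd g g) f) hf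
  set a2 : pullback (a1 ≫ pullback.snd g g) f ⟶ P1 := pullback.fst (a1 ≫ pullback.snd g g) f
  set b2 : pullback (a1 ≫ pullback.snd g g) f ⟶ X := pullback.snd (a1 ≫ pullback.snd g g) f
  have hc2 : a2 ≫ a1 ≫ pullback.snd g g = b2 ≫ f := by
    simpa using (pullback.condition : a2 ≫ (a1 ≫ pullback.snd g g) = b2 ≫ f)
  have hkey : (a2 ≫ b1) ≫ f ≫ g = b2 ≫ f ≫ g := by
    calc (a2 ≫ b1) ≫ f ≫ g = a2 ≫ (b1 ≫ f) ≫ g := by simp [Category.assoc]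
      _ = a2 ≫ (a1 ≫ pullback.fst g g) ≫ g := by rw [hc1]
      _ = a2 ≫ a1 ≫ pullback.snd g g ≫ g := by rw [← pullback.condition]; simp [Category.assoc]
      _ = (a2 ≫ a1 ≫ pullback.snd g g) ≫ g := by simp [Category.assoc]
      _ = (b2 ≫ f) ≫ g := by rw [hc2]
      _ = b2 ≫ f ≫ g := by simp [Category.assoc]
  have hgcoeq : pullback.fst g g ≫ h' = pullback.snd g g ≫ h' := by
    apply hP1.cancel
    apply hP2.cancel
    have hw2 := pullback.lift_fst (f := f ≫ g) (g := f ≫ g) (a2 ≫ b1) b2 hkey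
    have hw3 := pullback.lift_snd (f := f ≫ g) (g := f ≫ g) (a2 ≫ b1) b2 hkey
    calc a2 ≫ a1 ≫ pullback.fst g g ≫ h'
        = a2 ≫ (a1 ≫ pullback.fst g g) ≫ h' := by simp [Category.assoc]
      _ = a2 ≫ (b1 ≫ f) ≫ h' := by rw [hc1]
      _ = (a2 ≫ b1) ≫ f ≫ h' := by simp [Category.assoc]
      _ = (a2 ≫ b1) ≫ h := by rw [hfh']
      _ = pullback.lift _ _ hkey ≫ pullback.fst (f ≫ g) (f ≫ g) ≫ h := by
            rw [← Category.assoc, hw2]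
      _ = pullback.lift _ _ hkey ≫ pullback.snd (f ≫ g) (f ≫ g) ≫ h := by rw [hh]
      _ = b2 ≫ h := by rw [← Category.assoc, hw3]
      _ = b2 ≫ f ≫ h' := by rw [hfh']
      _ = (b2 ≫ f) ≫ h' := by simp [Category.assoc]
      _ = (a2 ≫ a1 ≫ pullback.snd g g) ≫ h' := by rw [hc2]
      _ = a2 ≫ a1 ≫ pullback.snd g g ≫ h' := by simp [Category.assoc]
  obtain ⟨u, hgu, _⟩ := hg.coeqKernelPair.2 h' hgcoeq
  refine ⟨u, ?_, ?_⟩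
  · show (f ≫ g) ≫ u = h
    rw [Category.assoc, hgu, hfh']
  intro v hv
  replace hv : (f ≫ g) ≫ v = h := hv
  apply hg.cancel
  apply hf.cancel
  rw [hgu, hfh']
  simpa [Category.assoc] using hv

end Toolkit


section Toolkit2

variable {N : MorphismProperty 𝒞}

/-- Descend along a regular-epi cover to get an inclusion of relations. -/
lemma Rel.le_of_cover [HasPullbacks 𝒞] {X Y : 𝒞} {τ σ : Rel 𝒞 X Y} {Q : 𝒞} {q : Q ⟶ τ.R}
    (hq : IsRegEpi q) (k : Q ⟶ σ.R) (h1 : q ≫ τ.p1 = k ≫ σ.p1) (h2 : q ≫ τ.p2 = k ≫ σ.p2) :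
    τ.le σ := by
  have hk : pullback.fst q q ≫ k = pullback.snd q q ≫ k := by
    apply σ.jm
    · rw [Category.assoc, Category.assoc, ← h1, ← Category.assoc, ← Category.assoc,
        pullback.condition]
    · rw [Category.assoc, Category.assoc, ← h2, ← Category.assoc, ← Category.assoc,
        pullback.condition]
  obtain ⟨j, hj, _⟩ := hq.coeqKernelPair.2 k hk
  refine ⟨j, hq.cancel ?_, hq.cancel ?_⟩
  · rw [← Category.assoc, hj, ← h1]
  · rw [← Category.assoc, hj, ← h2]

/-- (Regular epi, mono) factorisation of a morphism. -/
lemma imageFact [HasPullbacks 𝒞] (hcoeq : KernelPairsHaveCoequalisers 𝒞)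
    (hstab : RegEpisStable 𝒞) {W V : 𝒞} (h : W ⟶ V) :
    ∃ (I : 𝒞) (q : W ⟶ I) (m : I ⟶ V), IsRegEpi q ∧
      (∀ {T : 𝒞} (a b : T ⟶ I), a ≫ m = b ≫ m → a = b) ∧ q ≫ m = h := by
  obtain ⟨Q, q, hcond, hup⟩ :=
    hcoeq h (pullback.fst h h) (pullback.snd h h) (IsPullback.of_hasPullback h h)
  obtain ⟨m, hm, _⟩ := hup h pullback.condition
  have hq : IsRegEpi q := ⟨pullback h h, pullback.fst h h, pullback.snd h h, hcond, hup⟩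
  refine ⟨Q, q, m, hq, ?_, hm⟩
  intro T a b hab
  have hr1 : IsRegEpi (pullback.fst a q) :=
    hstab _ _ _ _ (IsPullback.of_hasPullback a q) hq
  set c1 : pullback a q ⟶ T := pullback.fst a q with hc1def
  set d1 : pullback a q ⟶ W := pullback.snd a q with hd1def
  have hcd1 : c1 ≫ a = d1 ≫ q := pullback.condition
  have hr2 : IsRegEpi (pullback.fst (c1 ≫ b) q) :=
    hstab _ _ _ _ (IsPullback.of_hasPullback (c1 ≫ b) q) hq
  set c2 : pullback (c1 ≫ b) q ⟶ pullback a q := pullback.fst (c1 ≫ b) q with hc2def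
  set d2 : pullback (c1 ≫ b) q ⟶ W := pullback.snd (c1 ≫ b) q with hd2def
  have hcd2 : c2 ≫ c1 ≫ b = d2 ≫ q := by
    simpa using (pullback.condition : c2 ≫ (c1 ≫ b) = d2 ≫ q)
  have hlift : (c2 ≫ d1) ≫ h = d2 ≫ h := by
    calc (c2 ≫ d1) ≫ h = c2 ≫ d1 ≫ q ≫ m := by rw [hm]; simp [Category.assoc]
      _ = c2 ≫ (d1 ≫ q) ≫ m := by simp [Category.assoc]
      _ = c2 ≫ (c1 ≫ a) ≫ m := by rw [hcd1]
      _ = c2 ≫ c1 ≫ a ≫ m := by simp [Category.assoc]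
      _ = c2 ≫ c1 ≫ b ≫ m := by rw [hab]
      _ = (c2 ≫ c1 ≫ b) ≫ m := by simp [Category.assoc]
      _ = (d2 ≫ q) ≫ m := by rw [hcd2]
      _ = d2 ≫ h := by rw [Category.assoc, hm]
  have hqq : (c2 ≫ d1) ≫ q = d2 ≫ q := by
    have h1 := pullback.lift_fst (f := h) (g := h) (c2 ≫ d1) d2 hlift
    have h2 := pullback.lift_snd (f := h) (g := h) (c2 ≫ d1) d2 hlift
    calc (c2 ≫ d1) ≫ q = pullback.lift _ _ hlift ≫ pullback.fst h h ≫ q := by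
          rw [← Category.assoc, h1]
      _ = pullback.lift _ _ hlift ≫ pullback.snd h h ≫ q := by rw [hcond]
      _ = d2 ≫ q := by rw [← Category.assoc, h2]
  apply hr1.cancel
  apply hr2.cancel
  calc c2 ≫ c1 ≫ a = c2 ≫ d1 ≫ q := by rw [hcd1]
    _ = (c2 ≫ d1) ≫ q := by simp [Category.assoc]
    _ = d2 ≫ q := hqq
    _ = c2 ≫ c1 ≫ b := hcd2.symm

/-- (Regular epi, jointly-mono) factorisation of a span. -/
lemma imageSpan [HasFiniteLimits 𝒞] (hcoeq : KernelPairsHaveCoequalisers 𝒞)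
    (hstab : RegEpisStable 𝒞) {W X Z : 𝒞} (p : W ⟶ X) (r : W ⟶ Z) :
    ∃ (τ : Rel 𝒞 X Z) (e : W ⟶ τ.R), IsRegEpi e ∧ e ≫ τ.p1 = p ∧ e ≫ τ.p2 = r := by
  obtain ⟨I, q, m, hq, hm, hqm⟩ := imageFact hcoeq hstab (prod.lift p r)
  refine ⟨⟨I, m ≫ prod.fst, m ≫ prod.snd, ?_⟩, q, hq, ?_, ?_⟩
  · intro T a b h1 h2
    apply hm
    apply Limits.prod.hom_ext
    · simpa [Category.assoc] using h1
    · simpa [Category.assoc] using h2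
  · show q ≫ m ≫ prod.fst = p
    rw [← Category.assoc, hqm, prod.lift_fst]
  · show q ≫ m ≫ prod.snd = r
    rw [← Category.assoc, hqm, prod.lift_snd]

/-- Composites of relations exist. -/
lemma relComp_exists [HasFiniteLimits 𝒞] (hcoeq : KernelPairsHaveCoequalisers 𝒞)
    (hstab : RegEpisStable 𝒞) {X Y Z : 𝒞} (σ : Rel 𝒞 Y Z) (ρ : Rel 𝒞 X Y) :
    ∃ τ, IsRelComp σ ρ τ := by
  obtain ⟨τ, e, he, h1, h2⟩ := imageSpan hcoeq hstab
    (pullback.fst ρ.p2 σ.p1 ≫ ρ.p1) (pullback.snd ρ.p2 σ.p1 ≫ σ.p2)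
  exact ⟨τ, e, he, h1, h2⟩

lemma IsNKernel.monoLike (hN : IsIdeal N) {X Y K : 𝒞} {f : X ⟶ Y} {n : K ⟶ X}
    (h : IsNKernel N f n) {T : 𝒞} {u v : T ⟶ K} (huv : u ≫ n = v ≫ n) : u = v := by
  obtain ⟨hn, hup⟩ := h
  have hNm : N ((u ≫ n) ≫ f) := by
    rw [Category.assoc]; exact hN _ _ (Or.inr hn)
  obtain ⟨w, hw, huniq⟩ := hup (u ≫ n) hNm
  exact (huniq u rfl).trans (huniq v huv.symm).symm

/-- Largest star subrelations exist, together with a universal mapping property. -/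
lemma starSubAux [HasFiniteLimits 𝒞] (hN : IsIdeal N) (hker : HasNKernels N)
    {X Y : 𝒞} (ρ : Rel 𝒞 X Y) :
    ∃ τ : Rel 𝒞 X Y, IsLargestStarSub N ρ τ ∧
      ∀ {T : 𝒞} (k : T ⟶ ρ.R), N (k ≫ ρ.p1) →
        ∃ w : T ⟶ τ.R, w ≫ τ.p1 = k ≫ ρ.p1 ∧ w ≫ τ.p2 = k ≫ ρ.p2 := by
  obtain ⟨K, n, hn⟩ := hker (𝟙 X)
  have hnN : N n := by simpa using hn.1
  set a : pullback n ρ.p1 ⟶ K := pullback.fst n ρ.p1 with hadef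
  set b : pullback n ρ.p1 ⟶ ρ.R := pullback.snd n ρ.p1 with hbdef
  have hab : a ≫ n = b ≫ ρ.p1 := pullback.condition
  refine ⟨⟨pullback n ρ.p1, b ≫ ρ.p1, b ≫ ρ.p2, ?_⟩, ⟨⟨b, rfl, rfl⟩, ?_, ?_⟩, ?_⟩
  · intro T u v h1 h2
    have hb : u ≫ b = v ≫ b := by
      apply ρ.jm
      · simpa [Category.assoc] using h1
      · simpa [Category.assoc] using h2
    apply pullback.hom_ext
    · apply hn.monoLike hN
      rw [Category.assoc, Category.assoc, hab, ← Category.assoc, ← Category.assoc, hb]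
    · exact hb
  · show N (b ≫ ρ.p1)
    rw [← hab]
    exact hN _ _ (Or.inr hnN)
  · intro σ hle hσ
    obtain ⟨j, hj1, hj2⟩ := hle
    have hσN : N (σ.p1 ≫ 𝟙 X) := by simpa using hσ
    obtain ⟨u, hu, _⟩ := hn.2 σ.p1 hσN
    have hcond : u ≫ n = j ≫ ρ.p1 := by rw [hu, hj1]
    refine ⟨pullback.lift u j hcond, ?_, ?_⟩
    · show pullback.lift u j hcond ≫ b ≫ ρ.p1 = σ.p1
      rw [← Category.assoc, hbdef, pullback.lift_snd, hj1]
    · show pullback.lift u j hcond ≫ b ≫ ρ.p2 = σ.p2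
      rw [← Category.assoc, hbdef, pullback.lift_snd, hj2]
  · intro T k hk
    have hkN : N (k ≫ ρ.p1 ≫ 𝟙 X) := by simpa using hk
    obtain ⟨u, hu, _⟩ := hn.2 (k ≫ ρ.p1) (by simpa using hkN)
    have hcond : u ≫ n = k ≫ ρ.p1 := hu
    refine ⟨pullback.lift u k hcond, ?_, ?_⟩
    · show pullback.lift u k hcond ≫ b ≫ ρ.p1 = k ≫ ρ.p1
      rw [← Category.assoc, hbdef, pullback.lift_snd]
    · show pullback.lift u k hcond ≫ b ≫ ρ.p2 = k ≫ ρ.p2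
      rw [← Category.assoc, hbdef, pullback.lift_snd]

/-- Mapping property into an arbitrary largest star subrelation. -/
lemma intoStarSub [HasFiniteLimits 𝒞] (hN : IsIdeal N) (hker : HasNKernels N)
    {X Y : 𝒞} {ρ sρ : Rel 𝒞 X Y} (hs : IsLargestStarSub N ρ sρ)
    {T : 𝒞} (k : T ⟶ ρ.R) (hk : N (k ≫ ρ.p1)) :
    ∃ w : T ⟶ sρ.R, w ≫ sρ.p1 = k ≫ ρ.p1 ∧ w ≫ sρ.p2 = k ≫ ρ.p2 := by
  obtain ⟨τ, hτ, hmap⟩ := starSubAux hN hker ρ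
  obtain ⟨j, hj1, hj2⟩ := hs.2.2 τ hτ.1 hτ.2.1
  obtain ⟨w, hw1, hw2⟩ := hmap k hk
  exact ⟨w ≫ j, by rw [Category.assoc, hj1, hw1], by rw [Category.assoc, hj2, hw2]⟩

lemma le_homRel_eq {X Y : 𝒞} {d : X ⟶ Y} {ds : Rel 𝒞 X Y} (h : ds.le (homRel d)) :
    ds.p2 = ds.p1 ≫ d := by
  obtain ⟨j, hj1, hj2⟩ := h
  have hj : j = ds.p1 := (Category.comp_id j).symm.trans hj1
  rw [← hj2, hj]
  rfl

lemma le_kerPair_comp [HasPullbacks 𝒞] {X Y : 𝒞} {g : X ⟶ Y} {sg : Rel 𝒞 X X}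
    (h : sg.le (kerPairRel g)) : sg.p1 ≫ g = sg.p2 ≫ g := by
  obtain ⟨j, hj1, hj2⟩ := h
  rw [← hj1, ← hj2, Category.assoc, Category.assoc]
  exact congrArg (j ≫ ·) (pullback.condition (f := g) (g := g))

end Toolkit2


section Key

variable {N : MorphismProperty 𝒞}

/-- From "all squares of type (1) are star-regular pushouts" deduce one inclusion of
2-star-permutability. -/
lemma keyIncl [HasFiniteLimits 𝒞] (hcoeq : KernelPairsHaveCoequalisers 𝒞)
    (hstab : RegEpisStable 𝒞) (hN : IsIdeal N) (hker : HasNKernels N)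
    (hsq : ∀ {A B E D : 𝒞} (f : A ⟶ B) (s : B ⟶ A) (g : E ⟶ D) (t : D ⟶ E)
        (c : E ⟶ A) (d : D ⟶ B), IsSquare1 f s g t c d → IsStarRegularPushout N f g c d)
    {X Y Z : 𝒞} (f : X ⟶ Y) (g : X ⟶ Z) (hg : IsRegEpi g)
    (sf sg : Rel 𝒞 X X) (hsf : IsLargestStarSub N (kerPairRel f) sf)
    (hsg : IsLargestStarSub N (kerPairRel g) sg)
    (τ₁ τ₂ : Rel 𝒞 X X) (hτ₁ : IsRelComp (kerPairRel f) sg τ₁)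
    (hτ₂ : IsRelComp (kerPairRel g) sf τ₂) : τ₁.le τ₂ := by
  classical
  -- the split epi `π₁ : R[f] → X` with its section `diag`
  have hdiagw : 𝟙 X ≫ f = 𝟙 X ≫ f := rfl
  set diag : X ⟶ pullback f f := pullback.lift (𝟙 X) (𝟙 X) hdiagw with hdiagdef
  have hdiag1 : diag ≫ pullback.fst f f = 𝟙 X := pullback.lift_fst _ _ _
  have hdiag2 : diag ≫ pullback.snd f f = 𝟙 X := pullback.lift_snd _ _ _
  -- the image `S` of `R[f]` in `Z × Z`
  obtain ⟨S, ee, hee, hee1, hee2⟩ := imageSpan hcoeq hstab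
    (pullback.fst f f ≫ g) (pullback.snd f f ≫ g)
  have hde1 : diag ≫ ee ≫ S.p1 = g := by
    rw [hee1, ← Category.assoc, hdiag1, Category.id_comp]
  have hde2 : diag ≫ ee ≫ S.p2 = g := by
    rw [hee2, ← Category.assoc, hdiag2, Category.id_comp]
  -- the induced section `δ : Z → S`
  have hd1 : pullback.fst g g ≫ (diag ≫ ee) = pullback.snd g g ≫ (diag ≫ ee) := by
    apply S.jm
    · simp only [Category.assoc, hde1]
      exact pullback.condition
    · simp only [Category.assoc, hde2]
      exact pullback.condition
  obtain ⟨δ, hδ, _⟩ := hg.coeqKernelPair.2 (diag ≫ ee) hd1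
  -- the square of type (1)
  have hsq1 : IsSquare1 S.p1 δ (pullback.fst f f) diag ee g := by
    refine ⟨?_, hdiag1, hee, hg, hee1, hδ⟩
    apply hg.cancel
    rw [← Category.assoc, hδ, Category.assoc, hde1, Category.comp_id]
  have srp := hsq S.p1 δ (pullback.fst f f) diag ee g hsq1
  -- build the four relations required by the star-regular pushout property
  obtain ⟨ρ, hρ⟩ := relComp_exists hcoeq hstab (homRel ee)
    (Rel.op (homRel (pullback.fst f f)))
  obtain ⟨τ, hτ, _⟩ := starSubAux (X := X) (Y := S.R) hN hker ρ
  obtain ⟨ds, hds, hdsmap⟩ := starSubAux hN hker (homRel g)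
  obtain ⟨μ, hμ⟩ := relComp_exists hcoeq hstab (Rel.op (homRel S.p1)) ds
  have hτμ := srp ρ τ μ ds hρ hτ hds hμ
  -- unpack the composites
  obtain ⟨e₁, he₁, he₁1, he₁2⟩ := hτ₁
  obtain ⟨e₂, he₂, he₂1, he₂2⟩ := hτ₂
  obtain ⟨eρ, heρ, heρ1, heρ2⟩ := hρ
  obtain ⟨eμ, heμ, heμ1, heμ2⟩ := hμ
  have heeA : ee ≫ S.p1 = (kerPairRel f).p1 ≫ g := hee1
  have heeB : ee ≫ S.p2 = (kerPairRel f).p2 ≫ g := hee2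
  -- data on the cover `P₁` of `τ₁`
  obtain ⟨A1, hA1⟩ : ∃ m, m = pullback.fst sg.p2 (kerPairRel f).p1 := ⟨_, rfl⟩
  obtain ⟨B1, hB1⟩ : ∃ m, m = pullback.snd sg.p2 (kerPairRel f).p1 := ⟨_, rfl⟩
  have hAB : A1 ≫ sg.p2 = B1 ≫ (kerPairRel f).p1 := by
    rw [hA1, hB1]; exact pullback.condition
  obtain ⟨x, hx⟩ : ∃ m, m = A1 ≫ sg.p1 := ⟨_, rfl⟩
  obtain ⟨y, hy⟩ : ∃ m, m = B1 ≫ (kerPairRel f).p2 := ⟨_, rfl⟩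
  have hNx : N x := by
    rw [hx]; exact hN A1 sg.p1 (Or.inr hsg.2.1)
  have hxg : x ≫ g = B1 ≫ (kerPairRel f).p1 ≫ g := by
    rw [hx, Category.assoc, le_kerPair_comp hsg.1, ← Category.assoc, hAB, Category.assoc]
  obtain ⟨κ, hκe⟩ : ∃ m, m = B1 ≫ ee := ⟨_, rfl⟩
  have hκ1 : κ ≫ S.p1 = B1 ≫ (kerPairRel f).p1 ≫ g := by
    erw [hκe, Category.assoc, heeA]
  have hκ2 : κ ≫ S.p2 = y ≫ g := by
    erw [hκe, Category.assoc, heeB, hy, Category.assoc]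
  -- map into `ds`
  obtain ⟨wds, hwds1, hwds2⟩ := hdsmap x (by simpa [homRel] using hNx)
  have hwds1' : wds ≫ ds.p1 = x := by simpa [homRel] using hwds1
  have hwds2' : wds ≫ ds.p2 = x ≫ g := by simpa [homRel] using hwds2
  -- map into `μ`
  have hcondμ : wds ≫ ds.p2 = κ ≫ (Rel.op (homRel S.p1)).p1 := by
    show wds ≫ ds.p2 = κ ≫ S.p1
    rw [hwds2', hκ1, hxg]
  obtain ⟨lμ, hlμe⟩ : ∃ m, m = pullback.lift wds κ hcondμ := ⟨_, rfl⟩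
  obtain ⟨kμ, hkμe⟩ : ∃ m, m = lμ ≫ eμ := ⟨_, rfl⟩
  have heμ2' : eμ ≫ μ.p2
      = pullback.snd ds.p2 (Rel.op (homRel S.p1)).p1 ≫ 𝟙 S.R := heμ2
  have hkμ1 : kμ ≫ μ.p1 = x := by
    erw [hkμe, Category.assoc, heμ1, ← Category.assoc, hlμe, pullback.lift_fst, hwds1']
  have hkμ2 : kμ ≫ μ.p2 = κ := by
    erw [hkμe, Category.assoc, heμ2', ← Category.assoc, hlμe, pullback.lift_snd]
    exact Category.comp_id κ
  -- move to `τ` and then to `ρ`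
  obtain ⟨j1, hj11, hj12⟩ := hτμ.2
  obtain ⟨j2, hj21, hj22⟩ := hτ.1
  obtain ⟨kρ, hkρe⟩ : ∃ m, m = (kμ ≫ j1) ≫ j2 := ⟨_, rfl⟩
  have hkρ1 : kρ ≫ ρ.p1 = x := by
    rw [hkρe, Category.assoc, hj21, Category.assoc, hj11, hkμ1]
  have hkρ2 : kρ ≫ ρ.p2 = κ := by
    rw [hkρe, Category.assoc, hj22, Category.assoc, hj12, hkμ2]
  -- cover `C1`
  obtain ⟨m1, hm1e⟩ : ∃ m, m = pullback.fst kρ eρ := ⟨_, rfl⟩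
  obtain ⟨m2, hm2e⟩ : ∃ m, m = pullback.snd kρ eρ := ⟨_, rfl⟩
  have hm1 : IsRegEpi m1 := by
    rw [hm1e]; exact hstab _ _ _ _ (IsPullback.of_hasPullback kρ eρ) heρ
  have hm12 : m1 ≫ kρ = m2 ≫ eρ := by
    rw [hm1e, hm2e]; exact pullback.condition
  -- the two projections of the pullback of identities agree
  have hfs : pullback.fst ((Rel.op (homRel (pullback.fst f f))).p2) ((homRel ee).p1)
      = pullback.snd ((Rel.op (homRel (pullback.fst f f))).p2) ((homRel ee).p1) := by
    have hc := pullback.condition (f := (Rel.op (homRel (pullback.fst f f))).p2)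
      (g := (homRel ee).p1)
    simpa [homRel, Rel.op] using hc
  obtain ⟨r', hr'e⟩ : ∃ m, m = m2 ≫
      pullback.fst ((Rel.op (homRel (pullback.fst f f))).p2) ((homRel ee).p1) := ⟨_, rfl⟩
  have hr1 : r' ≫ (kerPairRel f).p1 = m1 ≫ x := by
    erw [hr'e, Category.assoc]
    have h2 : pullback.fst ((Rel.op (homRel (pullback.fst f f))).p2) ((homRel ee).p1)
        ≫ (kerPairRel f).p1 = eρ ≫ ρ.p1 := heρ1.symm
    rw [h2, ← Category.assoc, ← hm12, Category.assoc, hkρ1]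
  have hr2 : r' ≫ ee = m1 ≫ κ := by
    erw [hr'e, Category.assoc]
    have h2 : pullback.fst ((Rel.op (homRel (pullback.fst f f))).p2) ((homRel ee).p1)
        ≫ ee = eρ ≫ ρ.p2 := by rw [hfs]; exact heρ2.symm
    rw [h2, ← Category.assoc, ← hm12, Category.assoc, hkρ2]
  obtain ⟨v, hve⟩ : ∃ m, m = r' ≫ (kerPairRel f).p2 := ⟨_, rfl⟩
  have heeB' : (kerPairRel f).p2 ≫ g = ee ≫ S.p2 := heeB.symm
  have hvy : v ≫ g = (m1 ≫ y) ≫ g := by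
    erw [hve, Category.assoc, heeB', ← Category.assoc, hr2, Category.assoc, hκ2,
      ← Category.assoc]
  -- map into `sf`
  obtain ⟨wsf, hwsf1, hwsf2⟩ := intoStarSub hN hker hsf r'
    (by erw [hr1]; exact hN m1 x (Or.inr hNx))
  -- map into `τ₂`
  obtain ⟨inner, hinne⟩ : ∃ m, m = pullback.lift v (m1 ≫ y) hvy := ⟨_, rfl⟩
  have hcond₂ : wsf ≫ sf.p2 = inner ≫ (kerPairRel g).p1 := by
    have h1 : inner ≫ (kerPairRel g).p1 = v := by
      rw [hinne]; exact pullback.lift_fst _ _ _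
    rw [h1, hwsf2, hve]
    rfl
  obtain ⟨l₂, hl₂e⟩ : ∃ m, m = pullback.lift wsf inner hcond₂ := ⟨_, rfl⟩
  obtain ⟨k₂, hk₂e⟩ : ∃ m, m = l₂ ≫ e₂ := ⟨_, rfl⟩
  have hk₂1 : k₂ ≫ τ₂.p1 = m1 ≫ x := by
    erw [hk₂e, Category.assoc, he₂1, ← Category.assoc, hl₂e, pullback.lift_fst, hwsf1, hr1]
  have hk₂2 : k₂ ≫ τ₂.p2 = m1 ≫ y := by
    erw [hk₂e, Category.assoc, he₂2, ← Category.assoc, hl₂e, pullback.lift_snd]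
    rw [hinne]; exact pullback.lift_snd _ _ _
  -- descend along the cover `m1 ≫ e₁`
  refine Rel.le_of_cover (regEpi_comp hstab hm1 he₁) k₂ ?_ ?_
  · rw [Category.assoc, he₁1, hk₂1, hx, hA1]
  · rw [Category.assoc, he₁2, hk₂2, hy, hB1]


/-- 2-star-permutability implies every square of type (1) is a star-regular pushout. -/
lemma keyForward [HasFiniteLimits 𝒞] (hcoeq : KernelPairsHaveCoequalisers 𝒞)
    (hstab : RegEpisStable 𝒞) (hN : IsIdeal N) (hker : HasNKernels N)
    (h2sp : TwoStarPermutable 𝒞 N)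
    {A B E D : 𝒞} (f : A ⟶ B) (s : B ⟶ A) (g : E ⟶ D) (t : D ⟶ E)
    (c : E ⟶ A) (d : D ⟶ B) (hsq : IsSquare1 f s g t c d) :
    IsStarRegularPushout N f g c d := by
  intro ρ τ μ ds hρ hτ hds hμ
  obtain ⟨e, he, he1, he2⟩ := hρ
  obtain ⟨eμ, heμ, heμ1, heμ2⟩ := hμ
  have he1' : e ≫ ρ.p1 = pullback.fst ((Rel.op (homRel g)).p2) ((homRel c).p1) ≫ g := he1
  have he2' : e ≫ ρ.p2 = pullback.snd ((Rel.op (homRel g)).p2) ((homRel c).p1) ≫ c := he2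
  have heμ2' : eμ ≫ μ.p2 = pullback.snd ds.p2 ((Rel.op (homRel f)).p1) ≫ 𝟙 A := heμ2
  have hfs : pullback.fst ((Rel.op (homRel g)).p2) ((homRel c).p1)
      = pullback.snd ((Rel.op (homRel g)).p2) ((homRel c).p1) := by
    simpa [homRel, Rel.op] using
      (pullback.condition (f := (Rel.op (homRel g)).p2) (g := (homRel c).p1))
  constructor
  · -- τ ≤ μ : the easy inclusion
    obtain ⟨jτ, hjτ1, hjτ2⟩ := hτ.1
    obtain ⟨q1, hq1e⟩ : ∃ m, m = pullback.fst jτ e := ⟨_, rfl⟩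
    obtain ⟨q2, hq2e⟩ : ∃ m, m = pullback.snd jτ e := ⟨_, rfl⟩
    have hq1 : IsRegEpi q1 := by
      rw [hq1e]; exact hstab _ _ _ _ (IsPullback.of_hasPullback jτ e) he
    have hq12 : q1 ≫ jτ = q2 ≫ e := by rw [hq1e, hq2e]; exact pullback.condition
    obtain ⟨w, hwe⟩ : ∃ m, m = q2 ≫
        pullback.fst ((Rel.op (homRel g)).p2) ((homRel c).p1) := ⟨_, rfl⟩
    have hw1 : q1 ≫ τ.p1 = w ≫ g := by
      erw [← hjτ1, ← Category.assoc, hq12, Category.assoc, he1', ← Category.assoc, ← hwe]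
    have hw2 : q1 ≫ τ.p2 = w ≫ c := by
      erw [← hjτ2, ← Category.assoc, hq12, Category.assoc, he2', ← hfs, ← Category.assoc,
        ← hwe]
      rfl
    have hNq : N (q1 ≫ τ.p1) := hN q1 τ.p1 (Or.inr hτ.2.1)
    obtain ⟨wds, hwds1, hwds2⟩ := intoStarSub hN hker hds (q1 ≫ τ.p1)
      (by simpa [homRel] using hNq)
    have hwds1' : wds ≫ ds.p1 = q1 ≫ τ.p1 := by simpa [homRel] using hwds1
    have hwds2' : wds ≫ ds.p2 = (q1 ≫ τ.p1) ≫ d := by simpa [homRel] using hwds2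
    have hcondμ : wds ≫ ds.p2 = (w ≫ c) ≫ (Rel.op (homRel f)).p1 := by
      show wds ≫ ds.p2 = (w ≫ c) ≫ f
      have hcf : (w ≫ c) ≫ f = (q1 ≫ τ.p1) ≫ d := by
        erw [Category.assoc, hsq.comm1, ← Category.assoc, ← hw1]
      rw [hwds2', hcf]
    obtain ⟨lμ, hlμe⟩ : ∃ m, m = pullback.lift wds (w ≫ c) hcondμ := ⟨_, rfl⟩
    obtain ⟨kμ, hkμe⟩ : ∃ m, m = lμ ≫ eμ := ⟨_, rfl⟩
    have hkμ1 : kμ ≫ μ.p1 = q1 ≫ τ.p1 := by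
      erw [hkμe, Category.assoc, heμ1, ← Category.assoc, hlμe, pullback.lift_fst, hwds1']
    have hkμ2 : kμ ≫ μ.p2 = q1 ≫ τ.p2 := by
      erw [hkμe, Category.assoc, heμ2', ← Category.assoc, hlμe, pullback.lift_snd, hw2]
      exact Category.comp_id _
    exact Rel.le_of_cover hq1 kμ hkμ1.symm hkμ2.symm
  · -- μ ≤ τ : uses 2-star-permutability of c and g
    have hgre : IsRegEpi g := isRegEpi_of_section t hsq.sec_g
    obtain ⟨sfc, hsfc, hsfcmap⟩ := starSubAux hN hker (kerPairRel c)
    obtain ⟨sgc, hsgc, hsgcmap⟩ := starSubAux hN hker (kerPairRel g)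
    obtain ⟨τ₁c, hτ₁c⟩ := relComp_exists hcoeq hstab (kerPairRel c) sgc
    obtain ⟨τ₂c, hτ₂c⟩ := relComp_exists hcoeq hstab (kerPairRel g) sfc
    have hperm := h2sp c g hsq.regepi_c hgre sfc sgc hsfc hsgc τ₁c τ₂c hτ₁c hτ₂c
    obtain ⟨e₁, he₁, he₁1, he₁2⟩ := hτ₁c
    obtain ⟨e₂, he₂, he₂1, he₂2⟩ := hτ₂c
    -- cover of μ and of E
    obtain ⟨r1, hr1e⟩ : ∃ m, m = pullback.fst
        (pullback.snd ds.p2 ((Rel.op (homRel f)).p1)) c := ⟨_, rfl⟩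
    obtain ⟨r2, hr2e⟩ : ∃ m, m = pullback.snd
        (pullback.snd ds.p2 ((Rel.op (homRel f)).p1)) c := ⟨_, rfl⟩
    have hr1re : IsRegEpi r1 := by
      rw [hr1e]
      exact hstab _ _ _ _ (IsPullback.of_hasPullback _ c) hsq.regepi_c
    have hr12 : r1 ≫ pullback.snd ds.p2 ((Rel.op (homRel f)).p1) = r2 ≫ c := by
      rw [hr1e, hr2e]; exact pullback.condition
    obtain ⟨x, hxe⟩ : ∃ m, m = r1 ≫
        pullback.fst ds.p2 ((Rel.op (homRel f)).p1) ≫ ds.p1 := ⟨_, rfl⟩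
    have hNx : N x := by
      rw [hxe]; exact hN _ _ (Or.inr (hN _ _ (Or.inr hds.2.1)))
    have hds2 : ds.p2 = ds.p1 ≫ d := le_homRel_eq hds.1
    have hpc : pullback.fst ds.p2 ((Rel.op (homRel f)).p1) ≫ ds.p2
        = pullback.snd ds.p2 ((Rel.op (homRel f)).p1) ≫ f := pullback.condition
    have hds2' : pullback.fst ds.p2 ((Rel.op (homRel f)).p1) ≫ ds.p2
        = pullback.fst ds.p2 ((Rel.op (homRel f)).p1) ≫ ds.p1 ≫ d :=
      congrArg (fun m => pullback.fst ds.p2 ((Rel.op (homRel f)).p1) ≫ m) hds2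
    have heq1 : r2 ≫ c ≫ f = x ≫ d := by
      erw [hxe, ← Category.assoc, ← hr12, Category.assoc, ← hpc, hds2']
      simp only [Category.assoc]
    obtain ⟨tx, htxe⟩ : ∃ m, m = x ≫ t := ⟨_, rfl⟩
    have hNtx : N tx := by rw [htxe]; exact hN x t (Or.inl hNx)
    obtain ⟨z, hze⟩ : ∃ m, m = r2 ≫ g ≫ t := ⟨_, rfl⟩
    have htxz : tx ≫ c = z ≫ c := by
      rw [htxe, hze]
      calc (x ≫ t) ≫ c = x ≫ t ≫ c := by rw [Category.assoc]
        _ = x ≫ d ≫ s := by rw [← hsq.comm2]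
        _ = (x ≫ d) ≫ s := by rw [← Category.assoc]
        _ = (r2 ≫ c ≫ f) ≫ s := by rw [← heq1]
        _ = (r2 ≫ g ≫ d) ≫ s := by rw [hsq.comm1]
        _ = r2 ≫ g ≫ d ≫ s := by simp only [Category.assoc]
        _ = r2 ≫ g ≫ t ≫ c := by rw [hsq.comm2]
        _ = (r2 ≫ g ≫ t) ≫ c := by simp only [Category.assoc]
    have hzg : z ≫ g = r2 ≫ g := by
      rw [hze]
      calc (r2 ≫ g ≫ t) ≫ g = r2 ≫ g ≫ t ≫ g := by simp only [Category.assoc]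
        _ = r2 ≫ g ≫ 𝟙 D := by rw [hsq.sec_g]
        _ = r2 ≫ g := by rw [Category.comp_id]
    -- map into `sfc`
    obtain ⟨ksf, hksfe⟩ : ∃ m, m = pullback.lift tx z htxz := ⟨_, rfl⟩
    have hNksf : N (ksf ≫ (kerPairRel c).p1) := by
      have h1 : ksf ≫ (kerPairRel c).p1 = tx := by
        rw [hksfe]; exact pullback.lift_fst _ _ _
      rw [h1]; exact hNtx
    obtain ⟨wsf, hwsf1, hwsf2⟩ := hsfcmap ksf hNksf
    have hwsf1' : wsf ≫ sfc.p1 = tx := by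
      rw [hwsf1, hksfe]; exact pullback.lift_fst _ _ _
    have hwsf2' : wsf ≫ sfc.p2 = z := by
      rw [hwsf2, hksfe]; exact pullback.lift_snd _ _ _
    -- map into `τ₂c`
    obtain ⟨kg, hkge⟩ : ∃ m, m = pullback.lift z r2 hzg := ⟨_, rfl⟩
    have hcond₂ : wsf ≫ sfc.p2 = kg ≫ (kerPairRel g).p1 := by
      have h1 : kg ≫ (kerPairRel g).p1 = z := by
        rw [hkge]; exact pullback.lift_fst _ _ _
      rw [h1, hwsf2']
    obtain ⟨l₂, hl₂e⟩ : ∃ m, m = pullback.lift wsf kg hcond₂ := ⟨_, rfl⟩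
    obtain ⟨k₂, hk₂e⟩ : ∃ m, m = l₂ ≫ e₂ := ⟨_, rfl⟩
    have hk₂1 : k₂ ≫ τ₂c.p1 = tx := by
      erw [hk₂e, Category.assoc, he₂1, ← Category.assoc, hl₂e, pullback.lift_fst, hwsf1']
    have hk₂2 : k₂ ≫ τ₂c.p2 = r2 := by
      erw [hk₂e, Category.assoc, he₂2, ← Category.assoc, hl₂e, pullback.lift_snd, hkge]
      exact pullback.lift_snd _ _ _
    -- move into `τ₁c` using permutability
    obtain ⟨j21, hj211, hj212⟩ := hperm.2
    obtain ⟨k₁, hk₁e⟩ : ∃ m, m = k₂ ≫ j21 := ⟨_, rfl⟩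
    have hk₁1 : k₁ ≫ τ₁c.p1 = tx := by rw [hk₁e, Category.assoc, hj211, hk₂1]
    have hk₁2 : k₁ ≫ τ₁c.p2 = r2 := by rw [hk₁e, Category.assoc, hj212, hk₂2]
    -- cover to unpack `τ₁c`
    obtain ⟨m1, hm1e⟩ : ∃ m, m = pullback.fst k₁ e₁ := ⟨_, rfl⟩
    obtain ⟨m2, hm2e⟩ : ∃ m, m = pullback.snd k₁ e₁ := ⟨_, rfl⟩
    have hm1re : IsRegEpi m1 := by
      rw [hm1e]; exact hstab _ _ _ _ (IsPullback.of_hasPullback k₁ e₁) he₁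
    have hm12 : m1 ≫ k₁ = m2 ≫ e₁ := by rw [hm1e, hm2e]; exact pullback.condition
    obtain ⟨wsg, hwsge⟩ : ∃ m, m = m2 ≫
        pullback.fst sgc.p2 ((kerPairRel c).p1) := ⟨_, rfl⟩
    obtain ⟨pr, hpre⟩ : ∃ m, m = m2 ≫
        pullback.snd sgc.p2 ((kerPairRel c).p1) := ⟨_, rfl⟩
    have hwp : wsg ≫ sgc.p2 = pr ≫ (kerPairRel c).p1 := by
      rw [hwsge, hpre, Category.assoc, Category.assoc, pullback.condition]
    have hwsg1 : wsg ≫ sgc.p1 = m1 ≫ tx := by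
      rw [hwsge, Category.assoc, ← he₁1, ← Category.assoc, ← hm12, Category.assoc, hk₁1]
    have hpr2 : pr ≫ (kerPairRel c).p2 = m1 ≫ r2 := by
      rw [hpre, Category.assoc, ← he₁2, ← Category.assoc, ← hm12, Category.assoc, hk₁2]
    obtain ⟨wE, hwEe⟩ : ∃ m, m = wsg ≫ sgc.p2 := ⟨_, rfl⟩
    have hwEg : wE ≫ g = m1 ≫ x := by
      rw [hwEe, Category.assoc, ← le_kerPair_comp hsgc.1, ← Category.assoc, hwsg1, htxe]
      simp only [Category.assoc]
      rw [hsq.sec_g, Category.comp_id]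
    have hwEc : wE ≫ c = m1 ≫ r2 ≫ c := by
      rw [hwEe, hwp, Category.assoc]
      have hcc : (kerPairRel c).p1 ≫ c = (kerPairRel c).p2 ≫ c := pullback.condition
      rw [hcc, ← Category.assoc, hpr2, Category.assoc]
    -- map into `ρ` and then into `τ`
    obtain ⟨ι, hιe⟩ : ∃ m, m = pullback.lift (f := (Rel.op (homRel g)).p2)
        (g := (homRel c).p1) (𝟙 E) (𝟙 E) rfl := ⟨_, rfl⟩
    have hι1 : ι ≫ pullback.fst ((Rel.op (homRel g)).p2) ((homRel c).p1) = 𝟙 E := by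
      rw [hιe]; exact pullback.lift_fst _ _ _
    have hι2 : ι ≫ pullback.snd ((Rel.op (homRel g)).p2) ((homRel c).p1) = 𝟙 E := by
      rw [hιe]; exact pullback.lift_snd _ _ _
    obtain ⟨kρ, hkρe⟩ : ∃ m, m = (wE ≫ ι) ≫ e := ⟨_, rfl⟩
    have hkρ1 : kρ ≫ ρ.p1 = m1 ≫ x := by
      rw [hkρe, Category.assoc, he1']
      rw [show (wE ≫ ι) ≫ pullback.fst ((Rel.op (homRel g)).p2) ((homRel c).p1) ≫ g
          = wE ≫ (ι ≫ pullback.fst ((Rel.op (homRel g)).p2) ((homRel c).p1)) ≫ g from by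
        simp only [Category.assoc]; erw [Category.assoc]]
      erw [hι1, Category.id_comp, hwEg]
    have hkρ2 : kρ ≫ ρ.p2 = m1 ≫ r2 ≫ c := by
      rw [hkρe, Category.assoc, he2']
      rw [show (wE ≫ ι) ≫ pullback.snd ((Rel.op (homRel g)).p2) ((homRel c).p1) ≫ c
          = wE ≫ (ι ≫ pullback.snd ((Rel.op (homRel g)).p2) ((homRel c).p1)) ≫ c from by
        simp only [Category.assoc]; erw [Category.assoc]]
      erw [hι2, Category.id_comp, hwEc]
    have hNkρ : N (kρ ≫ ρ.p1) := by rw [hkρ1]; exact hN _ _ (Or.inr hNx)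
    obtain ⟨wτ, hwτ1, hwτ2⟩ := intoStarSub hN hker hτ kρ hNkρ
    -- descend along the total cover
    refine Rel.le_of_cover (regEpi_comp hstab hm1re (regEpi_comp hstab hr1re heμ)) wτ ?_ ?_
    · rw [hwτ1, hkρ1, hxe]
      simp only [Category.assoc]
      rw [heμ1]
    · have heμ2'' : eμ ≫ μ.p2 = pullback.snd ds.p2 ((Rel.op (homRel f)).p1) :=
        heμ2.trans (Category.comp_id _)
      rw [hwτ2, hkρ2]
      simp only [Category.assoc]
      erw [heμ2'', hr12]

end Key

/-- A regular multi-pointed category with kernels is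
2-star-permutable iff every square of type (1) is a star-regular pushout. -/
theorem statement4 [HasFiniteLimits 𝒞]
    (hcoeq : KernelPairsHaveCoequalisers 𝒞) (hstab : RegEpisStable 𝒞)
    (N : MorphismProperty 𝒞) (hN : IsIdeal N) (hker : HasNKernels N) :
    TwoStarPermutable 𝒞 N ↔
      ∀ {A B E D : 𝒞} (f : A ⟶ B) (s : B ⟶ A) (g : E ⟶ D) (t : D ⟶ E)
        (c : E ⟶ A) (d : D ⟶ B), IsSquare1 f s g t c d →
        IsStarRegularPushout N f g c d := by
  constructor
  · intro h2sp A B E D f s g t c d h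
    exact keyForward hcoeq hstab hN hker h2sp f s g t c d h
  · intro hsq X Y Z f g hf hg sf sg hsf hsg τ₁ τ₂ h1 h2
    exact ⟨keyIncl hcoeq hstab hN hker hsq f g hg sf sg hsf hsg τ₁ τ₂ h1 h2,
      keyIncl hcoeq hstab hN hker hsq g f hf sg sf hsg hsf τ₂ τ₁ h2 h1⟩

end Paper
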